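/- For every finite simple graph G there exists a finite set P of points in the plane ℝ² such that the graph Φ(G) is isomorphic to the point visibility graph of P; that is, Φ(G) is a point visibility graph. -/

import Mathlib

/-- Two points `p q` are visible to each other with respect to the point set `P`
if they are distinct and no point of `P` lies in the open segment between them. -/
def Visible (P : Finset (ℝ × ℝ)) (p q : ℝ × ℝ) : Prop :=
  p ≠ q ∧ ∀ r ∈ P, r ∉ openSegment ℝ p q

/-- The point visibility graph of a finite point set `P` in the plane. -/
def PVG (P : Finset (ℝ × ℝ)) : SimpleGraph {x : ℝ × ℝ // x ∈ P} where
  Adj u v := Visible P u.1 v.1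
  symm := by
    constructor
    rintro u v ⟨hne, h⟩
    exact ⟨hne.symm, fun r hr hmem => h r hr (by rwa [openSegment_symm] at hmem)⟩
  loopless := by constructor; rintro u ⟨hne, -⟩; exact hne rfl

/-- The blockers of `Φ(G)`: one new vertex for each unordered pair of distinct
non-adjacent vertices of `G`. -/
def Blocker {V : Type} (G : SimpleGraph V) : Type :=
  {e : Sym2 V // ¬ e.IsDiag ∧ e ∉ G.edgeSet}

/-- The transformation `Φ`: the graph on `V ⊕ B` containing all edges of `G`,
in which every blocker is adjacent to all other vertices. -/
def Phi {V : Type} (G : SimpleGraph V) : SimpleGraph (V ⊕ Blocker G) :=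
  SimpleGraph.fromRel (fun x y =>
    match x, y with
    | Sum.inl u, Sum.inl v => G.Adj u v
    | _, _ => True)

noncomputable section Stmt6Aux
namespace Stmt6

/-! ### Elementary plane geometry -/

def det2 (a b c : ℝ × ℝ) : ℝ :=
  (b.1 - a.1) * (c.2 - a.2) - (b.2 - a.2) * (c.1 - a.1)

lemma det2_swap23 (a b c : ℝ × ℝ) : det2 a c b = - det2 a b c := by
  simp only [det2]; ring

lemma det2_rot (a b c : ℝ × ℝ) : det2 b c a = det2 a b c := by
  simp only [det2]; ring

lemma det2_self13 (a b : ℝ × ℝ) : det2 a b a = 0 := by simp [det2]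

lemma det2_openSegment {p q r : ℝ × ℝ} (h : r ∈ openSegment ℝ p q) :
    det2 p q r = 0 := by
  rw [openSegment_eq_image] at h
  obtain ⟨θ, _, rfl⟩ := h
  simp only [det2, Prod.fst_add, Prod.snd_add, Prod.smul_fst, Prod.smul_snd, smul_eq_mul]
  ring

lemma ne_left_of_openSegment {p q r : ℝ × ℝ} (hpq : p ≠ q) (h : r ∈ openSegment ℝ p q) :
    r ≠ p := by
  rintro rfl
  exact hpq (left_mem_openSegment_iff.mp h)

lemma ne_right_of_openSegment {p q r : ℝ × ℝ} (hpq : p ≠ q) (h : r ∈ openSegment ℝ p q) :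
    r ≠ q := by
  rintro rfl
  exact hpq (right_mem_openSegment_iff.mp h)

/-- if b is strictly between p and q, then q is not strictly between p and b -/
lemma not_mem_openSegment_of_mem {p q b : ℝ × ℝ} (hpq : p ≠ q)
    (hb : b ∈ openSegment ℝ p q) : q ∉ openSegment ℝ p b := by
  rw [openSegment_eq_image] at hb ⊢
  obtain ⟨θ, hθ, rfl⟩ := hb
  rintro ⟨σ, hσ, hq⟩
  simp only at hq
  have h2 : (1 - σ * θ) • (p - q) = (0 : ℝ × ℝ) := by
    linear_combination (norm := module) hq
  have hne : 1 - σ * θ ≠ 0 := by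
    have : σ * θ < 1 := by nlinarith [hθ.1, hθ.2, hσ.1, hσ.2]
    linarith
  rcases smul_eq_zero.mp h2 with h | h
  · exact hne h
  · exact hpq (sub_eq_zero.mp h)

lemma visible_symm {P : Finset (ℝ × ℝ)} {p q : ℝ × ℝ} (h : Visible P p q) :
    Visible P q p :=
  ⟨h.1.symm, fun r hr hm => h.2 r hr (by rwa [openSegment_symm] at hm)⟩

lemma exists_smul_of_cross_eq_zero {u w : ℝ × ℝ} (hu : u ≠ 0)
    (h : u.1 * w.2 - u.2 * w.1 = 0) : ∃ s : ℝ, w = s • u := by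
  rcases eq_or_ne u.1 0 with h1 | h1
  · have h2 : u.2 ≠ 0 := fun h2 => hu (Prod.ext h1 h2)
    have hw1 : w.1 = 0 := by
      rw [h1] at h; simp at h; tauto
    refine ⟨w.2 / u.2, ?_⟩
    ext
    · simp [hw1, h1]
    · simp; field_simp
  · refine ⟨w.1 / u.1, ?_⟩
    ext
    · simp; field_simp
    · simp; field_simp; nlinarith [h]

lemma det2_transfer {a b p q : ℝ × ℝ} (hab : a ≠ b)
    (hp : det2 a b p = 0) (hq : det2 a b q = 0) :
    det2 p q a = 0 ∧ det2 p q b = 0 := by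
  have hu : b - a ≠ (0 : ℝ × ℝ) := sub_ne_zero.mpr (Ne.symm hab)
  obtain ⟨s, hs⟩ : ∃ s : ℝ, p - a = s • (b - a) := by
    apply exists_smul_of_cross_eq_zero hu
    simp only [det2] at hp
    simp only [Prod.fst_sub, Prod.snd_sub]
    linarith [hp]
  obtain ⟨t, ht⟩ : ∃ t : ℝ, q - a = t • (b - a) := by
    apply exists_smul_of_cross_eq_zero hu
    simp only [det2] at hq
    simp only [Prod.fst_sub, Prod.snd_sub]
    linarith [hq]
  have hp' : p = a + s • (b - a) := by rw [← hs]; abel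
  have hq' : q = a + t • (b - a) := by rw [← ht]; abel
  subst hp' hq'
  constructor <;>
  · simp only [det2, Prod.fst_add, Prod.snd_add, Prod.smul_fst, Prod.smul_snd,
      Prod.fst_sub, Prod.snd_sub, smul_eq_mul]
    ring

lemma det2_affine (a b p q : ℝ × ℝ) (θ : ℝ) :
    det2 a b ((1 - θ) • p + θ • q) =
      det2 a b p + θ * ((b.1 - a.1) * (q.2 - p.2) - (b.2 - a.2) * (q.1 - p.1)) := by
  simp only [det2, Prod.fst_add, Prod.snd_add, Prod.smul_fst, Prod.smul_snd, smul_eq_mul]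
  ring

lemma exists_blocker_point (p q : ℝ × ℝ) (hpq : p ≠ q) (S : Finset (ℝ × ℝ))
    (hS : ∀ a ∈ S, det2 p q a = 0 → a = p ∨ a = q) :
    ∃ x ∈ openSegment ℝ p q, ∀ a ∈ S, ∀ b ∈ S, a ≠ b →
      det2 a b x = 0 → ({a, b} : Set (ℝ × ℝ)) = {p, q} := by
  classical
  set T : Finset ℝ := (S ×ˢ S).image (fun ab =>
    -(det2 ab.1 ab.2 p) /
      ((ab.2.1 - ab.1.1) * (q.2 - p.2) - (ab.2.2 - ab.1.2) * (q.1 - p.1))) with hT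
  have hinf : (Set.Ioo (0:ℝ) 1 \ ↑T).Infinite :=
    (Set.Ioo_infinite (by norm_num)).diff T.finite_toSet
  obtain ⟨θ, hθI, hθT⟩ := hinf.nonempty
  refine ⟨(1 - θ) • p + θ • q, ?_, ?_⟩
  · rw [openSegment_eq_image]
    exact ⟨θ, hθI, rfl⟩
  intro a ha b hb hab hcol
  by_contra hne
  set A := det2 a b p with hA
  set Bc := (b.1 - a.1) * (q.2 - p.2) - (b.2 - a.2) * (q.1 - p.1) with hBc
  have hx : A + θ * Bc = 0 := by rw [hA, hBc, ← det2_affine]; exact hcol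
  have key : ¬ (A = 0 ∧ Bc = 0) := by
    rintro ⟨hA0, hB0⟩
    have hq0 : det2 a b q = 0 := by
      have : det2 a b q = A + Bc := by simp only [hA, hBc, det2]; ring
      rw [this, hA0, hB0, add_zero]
    obtain ⟨hpa, hpb⟩ := det2_transfer hab hA0 hq0
    have hmk : (a = p ∨ a = q) ∧ (b = p ∨ b = q) → ({a, b} : Set (ℝ × ℝ)) = {p, q} := by
      rintro ⟨ha' | ha', hb' | hb'⟩ <;> subst ha' <;> subst hb'
      · exact absurd rfl hab
      · rfl
      · exact Set.pair_comm _ _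
      · exact absurd rfl hab
    have hcases : ¬ ((a = p ∨ a = q) ∧ (b = p ∨ b = q)) := fun h => hne (hmk h)
    rcases not_and_or.mp hcases with h | h
    · exact h (hS a ha hpa)
    · exact h (hS b hb hpb)
  rcases eq_or_ne Bc 0 with hB0 | hB0
  · exact key ⟨by rw [hB0, mul_zero, add_zero] at hx; exact hx, hB0⟩
  · apply hθT
    rw [hT]
    simp only [Finset.coe_image, Set.mem_image, Finset.mem_coe, Finset.mem_product]
    refine ⟨(a, b), ⟨ha, hb⟩, ?_⟩
    simp only
    rw [← hA, ← hBc]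
    field_simp
    linarith [hx]

/-! ### Blocker endpoints -/

variable {V : Type} (G : SimpleGraph V)

def bfst (e : Blocker G) : V := (Quot.out e.1).1
def bsnd (e : Blocker G) : V := (Quot.out e.1).2

lemma bmk (e : Blocker G) : s(bfst G e, bsnd G e) = e.1 := Quot.out_eq e.1

lemma bne (e : Blocker G) : bfst G e ≠ bsnd G e := by
  intro h
  apply e.2.1
  rw [← bmk G e, Sym2.mk_isDiag_iff]
  exact h

lemma bnadj (e : Blocker G) : ¬ G.Adj (bfst G e) (bsnd G e) := by
  intro h
  exact e.2.2 (by rw [← bmk G e] at *; exact h)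

/-! ### The invariant -/

def Pts (f : V → ℝ × ℝ) (g : Blocker G → ℝ × ℝ) (B : Finset (Blocker G)) : Set (ℝ × ℝ) :=
  Set.range f ∪ g '' ↑B

structure GoodCfg (f : V → ℝ × ℝ) (g : Blocker G → ℝ × ℝ) (B : Finset (Blocker G)) : Prop where
  seg : ∀ e ∈ B, g e ∈ openSegment ℝ (f (bfst G e)) (f (bsnd G e))
  nf : ∀ e ∈ B, ∀ v : V, g e ≠ f v
  ginj : ∀ e ∈ B, ∀ e' ∈ B, g e = g e' → e = e'
  col : ∀ p ∈ Pts G f g B, ∀ q ∈ Pts G f g B, ∀ r ∈ Pts G f g B,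
    p ≠ q → p ≠ r → q ≠ r → det2 p q r = 0 →
    ∃ e ∈ B, ({p, q, r} : Set (ℝ × ℝ)) = {f (bfst G e), f (bsnd G e), g e}


lemma pair_union_triple {a b p q x : ℝ × ℝ} (h : ({a, b} : Set (ℝ × ℝ)) = {p, q}) :
    ({a, b, x} : Set (ℝ × ℝ)) = {p, q, x} := by
  rw [Set.ext_iff] at h
  ext z
  have := h z
  simp only [Set.mem_insert_iff, Set.mem_singleton_iff] at this ⊢
  tauto

lemma triple_perm_mid (a b x : ℝ × ℝ) : ({a, x, b} : Set (ℝ × ℝ)) = {a, b, x} := by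
  ext z; simp only [Set.mem_insert_iff, Set.mem_singleton_iff]; tauto

lemma triple_perm_left (a b x : ℝ × ℝ) : ({x, a, b} : Set (ℝ × ℝ)) = {a, b, x} := by
  ext z; simp only [Set.mem_insert_iff, Set.mem_singleton_iff]; tauto

variable [Fintype V]

lemma main_ind (f : V → ℝ × ℝ) (hf : Function.Injective f)
    (hpar : ∀ u v w : V, u ≠ v → u ≠ w → v ≠ w → det2 (f u) (f v) (f w) ≠ 0)
    (B : Finset (Blocker G)) : ∃ g, GoodCfg G f g B := by
  classical
  induction B using Finset.induction_on with
  | empty =>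
    refine ⟨fun _ => (0, 0), ?_, ?_, ?_, ?_⟩
    · intro e he; simp at he
    · intro e he; simp at he
    · intro e he; simp at he
    · intro p hp q hq r hr hpq hpr hqr hcol
      exfalso
      simp only [Pts, Finset.coe_empty, Set.image_empty, Set.union_empty,
        Set.mem_range] at hp hq hr
      obtain ⟨u, rfl⟩ := hp
      obtain ⟨v, rfl⟩ := hq
      obtain ⟨w, rfl⟩ := hr
      exact hpar u v w (fun h => hpq (congrArg f h)) (fun h => hpr (congrArg f h))
        (fun h => hqr (congrArg f h)) hcol
  | @insert e B henB ih =>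
    obtain ⟨g, hg⟩ := ih
    set p0 := f (bfst G e) with hp0
    set q0 := f (bsnd G e) with hq0
    have hp0q0 : p0 ≠ q0 := fun h => bne G e (hf h)
    set S : Finset (ℝ × ℝ) := Finset.univ.image f ∪ B.image g with hSdef
    have hScoe : (↑S : Set (ℝ × ℝ)) = Pts G f g B := by
      simp [hSdef, Pts, Set.image_univ]
    have hmemS : ∀ z, z ∈ Pts G f g B → z ∈ S := by
      intro z hz; rw [← hScoe] at hz; exact hz
    have hfP : ∀ v : V, f v ∈ Pts G f g B := fun v => Or.inl ⟨v, rfl⟩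
    have hgP : ∀ e' ∈ B, g e' ∈ Pts G f g B := fun e' he' => Or.inr ⟨e', he', rfl⟩
    -- precondition: no current point other than p0, q0 lies on the line p0 q0
    have hS : ∀ a ∈ S, det2 p0 q0 a = 0 → a = p0 ∨ a = q0 := by
      intro a haS hcol0
      rw [← Finset.mem_coe, hScoe] at haS
      rcases haS with ⟨w, rfl⟩ | ⟨e', he', rfl⟩
      · rcases eq_or_ne w (bfst G e) with rfl | hw1
        · exact Or.inl rfl
        rcases eq_or_ne w (bsnd G e) with rfl | hw2
        · exact Or.inr rfl
        exact absurd hcol0 (hpar _ _ w (bne G e) (Ne.symm hw1) (Ne.symm hw2))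
      · exfalso
        have hne1 : p0 ≠ g e' := fun h => hg.nf e' he' (bfst G e) h.symm
        have hne2 : q0 ≠ g e' := fun h => hg.nf e' he' (bsnd G e) h.symm
        obtain ⟨e'', he'', heq⟩ := hg.col p0 (hfP _) q0 (hfP _) (g e') (hgP e' he')
          hp0q0 hne1 hne2 hcol0
        -- g e'' must be g e'
        have hge'' : g e'' ∈ ({p0, q0, g e'} : Set (ℝ × ℝ)) := by
          rw [heq]; simp
        have hge''eq : g e'' = g e' := by
          rcases hge'' with h | h | h
          · exact absurd h (hg.nf e'' he'' (bfst G e))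
          · exact absurd h (hg.nf e'' he'' (bsnd G e))
          · exact h
        have he''e' : e'' = e' := hg.ginj e'' he'' e' he' hge''eq
        -- f (bfst e'') and f (bsnd e'') are in {p0, q0}
        have h1 : f (bfst G e'') ∈ ({p0, q0, g e'} : Set (ℝ × ℝ)) := by
          rw [heq]; simp
        have h2 : f (bsnd G e'') ∈ ({p0, q0, g e'} : Set (ℝ × ℝ)) := by
          rw [heq]; simp
        have hb1 : bfst G e'' = bfst G e ∨ bfst G e'' = bsnd G e := by
          rcases h1 with h | h | h
          · exact Or.inl (hf h)
          · exact Or.inr (hf h)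
          · exact absurd h.symm (hg.nf e' he' _)
        have hb2 : bsnd G e'' = bfst G e ∨ bsnd G e'' = bsnd G e := by
          rcases h2 with h | h | h
          · exact Or.inl (hf h)
          · exact Or.inr (hf h)
          · exact absurd h.symm (hg.nf e' he' _)
        have he''e : e'' = e := by
          apply Subtype.ext
          rw [← bmk G e'', ← bmk G e, Sym2.eq_iff]
          rcases hb1 with h | h <;> rcases hb2 with h' | h'
          · exact absurd (h.trans h'.symm) (bne G e'')
          · exact Or.inl ⟨h, h'⟩
          · exact Or.inr ⟨h, h'⟩
          · exact absurd (h.trans h'.symm) (bne G e'')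
        exact henB (by rw [← he''e, he''e']; exact he')
    obtain ⟨x, hxseg, hxavoid⟩ := exists_blocker_point p0 q0 hp0q0 S hS
    have hxp0 : x ≠ p0 := ne_left_of_openSegment hp0q0 hxseg
    have hxq0 : x ≠ q0 := ne_right_of_openSegment hp0q0 hxseg
    -- x is distinct from all old points
    have hxnew : ∀ z ∈ Pts G f g B, x ≠ z := by
      intro z hz hxz
      subst hxz
      rcases hz with ⟨w, rfl⟩ | ⟨e', he', rfl⟩
      · have hwp : f w ≠ p0 := fun h => hxp0 h
        have hpair := hxavoid (f w) (hmemS _ (hfP w)) p0 (hmemS _ (hfP _)) hwp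
          (det2_self13 _ _)
        have : f w ∈ ({p0, q0} : Set (ℝ × ℝ)) := by
          rw [← hpair]; simp
        rcases this with h | h
        · exact hwp h
        · exact hxq0 h
      · have hwp : g e' ≠ p0 := fun h => hxp0 h
        have hpair := hxavoid (g e') (hmemS _ (hgP e' he')) p0 (hmemS _ (hfP _)) hwp
          (det2_self13 _ _)
        have : g e' ∈ ({p0, q0} : Set (ℝ × ℝ)) := by
          rw [← hpair]; simp
        rcases this with h | h
        · exact hwp h
        · exact hxq0 h
    set g' := Function.update g e x with hg'def
    have hg'e : g' e = x := Function.update_self e x g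
    have hg'old : ∀ e' ∈ B, g' e' = g e' := by
      intro e' he'
      exact Function.update_of_ne (fun h : e' = e => henB (by rw [← h]; exact he')) x g
    have hPts : Pts G f g' (insert e B) = Pts G f g B ∪ {x} := by
      simp only [Pts, Finset.coe_insert, Set.image_insert_eq, hg'e]
      have : g' '' ↑B = g '' ↑B := by
        apply Set.image_congr
        intro e' he'
        exact hg'old e' he'
      rw [this]
      ext z
      simp only [Set.mem_union, Set.mem_insert_iff, Set.mem_singleton_iff]
      tauto
    refine ⟨g', ?_, ?_, ?_, ?_⟩
    · intro e' he'
      rcases Finset.mem_insert.mp he' with rfl | he'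
      · rw [hg'e]; exact hxseg
      · rw [hg'old e' he']; exact hg.seg e' he'
    · intro e' he' v
      rcases Finset.mem_insert.mp he' with rfl | he'
      · rw [hg'e]; exact fun h => hxnew (f v) (hfP v) h
      · rw [hg'old e' he']; exact hg.nf e' he' v
    · intro e1 he1 e2 he2 h12
      rcases Finset.mem_insert.mp he1 with h1 | h1 <;>
        rcases Finset.mem_insert.mp he2 with h2 | h2
      · rw [h1, h2]
      · exfalso
        rw [h1, hg'e, hg'old e2 h2] at h12
        exact hxnew (g e2) (hgP e2 h2) h12
      · exfalso
        rw [h2, hg'e, hg'old e1 h1] at h12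
        exact hxnew (g e1) (hgP e1 h1) h12.symm
      · exact hg.ginj e1 h1 e2 h2 (by rwa [hg'old e1 h1, hg'old e2 h2] at h12)
    · intro p hp q hq r hr hpq hpr hqr hcol
      rw [hPts] at hp hq hr
      have newcase : ∀ a b : ℝ × ℝ, a ∈ Pts G f g B → b ∈ Pts G f g B → a ≠ b →
          det2 a b x = 0 → ({a, b} : Set (ℝ × ℝ)) = {p0, q0} :=
        fun a b ha hb hab h => hxavoid a (hmemS a ha) b (hmemS b hb) hab h
      rcases hp with hp | hpx
      · rcases hq with hq | hqx
        · rcases hr with hr | hrx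
          · -- all old
            obtain ⟨e', he', heq⟩ := hg.col p hp q hq r hr hpq hpr hqr hcol
            exact ⟨e', Finset.mem_insert_of_mem he', by rw [heq, hg'old e' he']⟩
          · -- r = x
            rw [Set.mem_singleton_iff] at hrx
            have hcol' : det2 p q x = 0 := by rw [← hrx]; exact hcol
            have hpair := newcase p q hp hq hpq hcol'
            refine ⟨e, Finset.mem_insert_self e B, ?_⟩
            rw [hg'e, ← hp0, ← hq0, hrx]
            exact pair_union_triple hpair
        · -- q = x
          rw [Set.mem_singleton_iff] at hqx
          rcases hr with hr | hrx
          · have hcol1 : det2 p x r = 0 := by rw [← hqx]; exact hcol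
            have hcol' : det2 p r x = 0 := by
              have h := det2_swap23 p r x
              rw [hcol1] at h
              linarith
            have hpair := newcase p r hp hr hpr hcol'
            refine ⟨e, Finset.mem_insert_self e B, ?_⟩
            rw [hg'e, ← hp0, ← hq0, hqx, triple_perm_mid]
            exact pair_union_triple hpair
          · rw [Set.mem_singleton_iff] at hrx
            exact absurd (hqx.trans hrx.symm) hqr
      · -- p = x
        rw [Set.mem_singleton_iff] at hpx
        rcases hq with hq | hqx
        · rcases hr with hr | hrx
          · have hcol' : det2 q r x = 0 := by
              rw [det2_rot x q r, ← hpx]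
              exact hcol
            have hpair := newcase q r hq hr hqr hcol'
            refine ⟨e, Finset.mem_insert_self e B, ?_⟩
            rw [hg'e, ← hp0, ← hq0, hpx, triple_perm_left]
            exact pair_union_triple hpair
          · rw [Set.mem_singleton_iff] at hrx
            exact absurd (hpx.trans hrx.symm) hpr
        · rw [Set.mem_singleton_iff] at hqx
          exact absurd (hpx.trans hqx.symm) hpq

end Stmt6
end Stmt6Aux

theorem stmt_6 {V : Type} [Fintype V] (G : SimpleGraph V) :
    ∃ P : Finset (ℝ × ℝ), Nonempty ((Phi G) ≃g PVG P) := by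
  classical
  haveI : Finite (Blocker G) := Subtype.finite
  letI : Fintype (Blocker G) := Fintype.ofFinite _
  set t : V → ℝ := fun v => ((Fintype.equivFin V v : ℕ) : ℝ) with ht_def
  have ht : Function.Injective t := by
    intro u v h
    have : (Fintype.equivFin V u : ℕ) = (Fintype.equivFin V v : ℕ) := Nat.cast_injective h
    exact (Fintype.equivFin V).injective (Fin.ext this)
  set f : V → ℝ × ℝ := fun v => (t v, (t v) ^ 2) with hf_def
  have hf : Function.Injective f := fun u v h => ht (congrArg Prod.fst h)
  have hpar : ∀ u v w : V, u ≠ v → u ≠ w → v ≠ w →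
      Stmt6.det2 (f u) (f v) (f w) ≠ 0 := by
    intro u v w huv huw hvw h
    simp only [Stmt6.det2, hf_def] at h
    have key : (t v - t u) * ((t w) ^ 2 - (t u) ^ 2) -
        ((t v) ^ 2 - (t u) ^ 2) * (t w - t u) =
        (t v - t u) * (t w - t u) * (t w - t v) := by ring
    rw [key] at h
    have h1 : t v - t u ≠ 0 := sub_ne_zero.mpr (fun e => huv (ht e).symm)
    have h2 : t w - t u ≠ 0 := sub_ne_zero.mpr (fun e => huw (ht e).symm)
    have h3 : t w - t v ≠ 0 := sub_ne_zero.mpr (fun e => hvw (ht e).symm)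
    rcases mul_eq_zero.mp h with h' | h'
    · rcases mul_eq_zero.mp h' with h'' | h''
      · exact h1 h''
      · exact h2 h''
    · exact h3 h'
  obtain ⟨g, hg⟩ := Stmt6.main_ind G f hf hpar Finset.univ
  set P : Finset (ℝ × ℝ) := Finset.univ.image f ∪ Finset.univ.image g with hP_def
  have hfPmem : ∀ v : V, f v ∈ P := fun v =>
    Finset.mem_union_left _ (Finset.mem_image_of_mem f (Finset.mem_univ v))
  have hgPmem : ∀ e : Blocker G, g e ∈ P := fun e =>
    Finset.mem_union_right _ (Finset.mem_image_of_mem g (Finset.mem_univ e))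
  have hPcoe : (↑P : Set (ℝ × ℝ)) = Stmt6.Pts G f g Finset.univ := by
    simp [hP_def, Stmt6.Pts, Set.image_univ]
  have hnf : ∀ (e : Blocker G) (v : V), g e ≠ f v := fun e v =>
    hg.nf e (Finset.mem_univ e) v
  have hginj : ∀ e e' : Blocker G, g e = g e' → e = e' := fun e e' h =>
    hg.ginj e (Finset.mem_univ e) e' (Finset.mem_univ e') h
  have hfPts : ∀ v : V, f v ∈ Stmt6.Pts G f g Finset.univ := fun v => Or.inl ⟨v, rfl⟩
  have hgPts : ∀ e : Blocker G, g e ∈ Stmt6.Pts G f g Finset.univ := fun e =>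
    Or.inr ⟨e, by simp, rfl⟩
  -- visibility of vertex-blocker pairs
  have hVfg : ∀ (u : V) (e : Blocker G), Visible P (f u) (g e) := by
    intro u e
    have hne1 : f u ≠ g e := fun h => hnf e u h.symm
    refine ⟨hne1, ?_⟩
    intro r hrP hrseg
    have hrPts : r ∈ Stmt6.Pts G f g Finset.univ := by
      rw [← hPcoe]; exact hrP
    have hcol : Stmt6.det2 (f u) (g e) r = 0 := Stmt6.det2_openSegment hrseg
    have hr1 : r ≠ f u := Stmt6.ne_left_of_openSegment hne1 hrseg
    have hr2 : r ≠ g e := Stmt6.ne_right_of_openSegment hne1 hrseg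
    obtain ⟨e', -, heq⟩ := hg.col (f u) (hfPts u) (g e) (hgPts e) r hrPts
      hne1 (Ne.symm hr1) (Ne.symm hr2) hcol
    rcases hrPts with ⟨w, hw⟩ | ⟨e'', -, he''⟩
    · -- r is a vertex point f w
      have hge' : g e' ∈ ({f u, g e, r} : Set (ℝ × ℝ)) := by rw [heq]; simp
      have he'e : e' = e := by
        rcases hge' with h | h | h
        · exact absurd h (hnf e' u)
        · exact hginj e' e h
        · rw [← hw] at h; exact absurd h (hnf e' w)
      have hfa : f (Stmt6.bfst G e') ∈ ({f u, g e, r} : Set (ℝ × ℝ)) := by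
        rw [heq]; simp
      have hfb : f (Stmt6.bsnd G e') ∈ ({f u, g e, r} : Set (ℝ × ℝ)) := by
        rw [heq]; simp
      have ha : Stmt6.bfst G e' = u ∨ Stmt6.bfst G e' = w := by
        rcases hfa with h | h | h
        · exact Or.inl (hf h)
        · exact absurd h.symm (hnf e _)
        · rw [← hw] at h; exact Or.inr (hf h)
      have hb : Stmt6.bsnd G e' = u ∨ Stmt6.bsnd G e' = w := by
        rcases hfb with h | h | h
        · exact Or.inl (hf h)
        · exact absurd h.symm (hnf e _)
        · rw [← hw] at h; exact Or.inr (hf h)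
      have hfufw : f u ≠ r := Ne.symm hr1
      have hseg' := hg.seg e' (Finset.mem_univ e')
      -- g e ∈ openSegment (f u) r in both cases
      have hkey : g e ∈ openSegment ℝ (f u) r := by
        rcases ha with ha | ha <;> rcases hb with hb | hb
        · exact absurd (ha.trans hb.symm) (Stmt6.bne G e')
        · rw [ha, hb, hw, he'e] at hseg'; exact hseg'
        · rw [ha, hb, hw, he'e] at hseg'; rwa [openSegment_symm] at hseg'
        · exact absurd (ha.trans hb.symm) (Stmt6.bne G e')
      exact Stmt6.not_mem_openSegment_of_mem hfufw hkey hrseg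
    · -- r is a blocker point: impossible
      have hfa : f (Stmt6.bfst G e') ∈ ({f u, g e, r} : Set (ℝ × ℝ)) := by
        rw [heq]; simp
      have hfb : f (Stmt6.bsnd G e') ∈ ({f u, g e, r} : Set (ℝ × ℝ)) := by
        rw [heq]; simp
      have ha : Stmt6.bfst G e' = u := by
        rcases hfa with h | h | h
        · exact hf h
        · exact absurd h.symm (hnf e _)
        · rw [← he''] at h; exact absurd h.symm (hnf e'' _)
      have hb : Stmt6.bsnd G e' = u := by
        rcases hfb with h | h | h
        · exact hf h
        · exact absurd h.symm (hnf e _)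
        · rw [← he''] at h; exact absurd h.symm (hnf e'' _)
      exact absurd (ha.trans hb.symm) (Stmt6.bne G e')
  -- visibility of adjacent vertex pairs
  have hVff : ∀ u v : V, G.Adj u v → Visible P (f u) (f v) := by
    intro u v hadj
    have hne1 : f u ≠ f v := fun h => (G.ne_of_adj hadj) (hf h)
    refine ⟨hne1, ?_⟩
    intro r hrP hrseg
    have hrPts : r ∈ Stmt6.Pts G f g Finset.univ := by
      rw [← hPcoe]; exact hrP
    have hcol : Stmt6.det2 (f u) (f v) r = 0 := Stmt6.det2_openSegment hrseg
    have hr1 : r ≠ f u := Stmt6.ne_left_of_openSegment hne1 hrseg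
    have hr2 : r ≠ f v := Stmt6.ne_right_of_openSegment hne1 hrseg
    obtain ⟨e', -, heq⟩ := hg.col (f u) (hfPts u) (f v) (hfPts v) r hrPts
      hne1 (Ne.symm hr1) (Ne.symm hr2) hcol
    have hge' : g e' ∈ ({f u, f v, r} : Set (ℝ × ℝ)) := by rw [heq]; simp
    have hger : g e' = r := by
      rcases hge' with h | h | h
      · exact absurd h (hnf e' u)
      · exact absurd h (hnf e' v)
      · exact h
    have hfa : f (Stmt6.bfst G e') ∈ ({f u, f v, r} : Set (ℝ × ℝ)) := by
      rw [heq]; simp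
    have hfb : f (Stmt6.bsnd G e') ∈ ({f u, f v, r} : Set (ℝ × ℝ)) := by
      rw [heq]; simp
    have ha : Stmt6.bfst G e' = u ∨ Stmt6.bfst G e' = v := by
      rcases hfa with h | h | h
      · exact Or.inl (hf h)
      · exact Or.inr (hf h)
      · have h' : f (Stmt6.bfst G e') = r := h
        rw [← hger] at h'
        exact absurd h'.symm (hnf e' _)
    have hb : Stmt6.bsnd G e' = u ∨ Stmt6.bsnd G e' = v := by
      rcases hfb with h | h | h
      · exact Or.inl (hf h)
      · exact Or.inr (hf h)
      · have h' : f (Stmt6.bsnd G e') = r := h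
        rw [← hger] at h'
        exact absurd h'.symm (hnf e' _)
    have hsym2 : (e' : Blocker G).1 = s(u, v) := by
      rw [← Stmt6.bmk G e', Sym2.eq_iff]
      rcases ha with h | h <;> rcases hb with h' | h'
      · exact absurd (h.trans h'.symm) (Stmt6.bne G e')
      · exact Or.inl ⟨h, h'⟩
      · exact Or.inr ⟨h, h'⟩
      · exact absurd (h.trans h'.symm) (Stmt6.bne G e')
    apply e'.2.2
    rw [hsym2]
    exact hadj
  -- non-adjacent distinct vertex pairs are blocked
  have hVffn : ∀ u v : V, u ≠ v → ¬ G.Adj u v → ¬ Visible P (f u) (f v) := by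
    intro u v huv hnadj hvis
    have hdiag : ¬ (s(u, v) : Sym2 V).IsDiag := by
      rw [Sym2.mk_isDiag_iff]; exact huv
    have hedge : s(u, v) ∉ G.edgeSet := hnadj
    set e : Blocker G := ⟨s(u, v), hdiag, hedge⟩ with he_def
    have hseg := hg.seg e (Finset.mem_univ e)
    have hsym2 : s(Stmt6.bfst G e, Stmt6.bsnd G e) = s(u, v) := Stmt6.bmk G e
    rw [Sym2.eq_iff] at hsym2
    have hkey : g e ∈ openSegment ℝ (f u) (f v) := by
      rcases hsym2 with ⟨h1, h2⟩ | ⟨h1, h2⟩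
      · rw [h1, h2] at hseg; exact hseg
      · rw [h1, h2] at hseg; rwa [openSegment_symm] at hseg
    exact hvis.2 (g e) (hgPmem e) hkey
  -- blockers see each other
  have hVgg : ∀ e e' : Blocker G, e ≠ e' → Visible P (g e) (g e') := by
    intro e e' hee
    have hne1 : g e ≠ g e' := fun h => hee (hginj e e' h)
    refine ⟨hne1, ?_⟩
    intro r hrP hrseg
    have hrPts : r ∈ Stmt6.Pts G f g Finset.univ := by
      rw [← hPcoe]; exact hrP
    have hcol : Stmt6.det2 (g e) (g e') r = 0 := Stmt6.det2_openSegment hrseg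
    have hr1 : r ≠ g e := Stmt6.ne_left_of_openSegment hne1 hrseg
    have hr2 : r ≠ g e' := Stmt6.ne_right_of_openSegment hne1 hrseg
    obtain ⟨e'', -, heq⟩ := hg.col (g e) (hgPts e) (g e') (hgPts e') r hrPts
      hne1 (Ne.symm hr1) (Ne.symm hr2) hcol
    have hfa : f (Stmt6.bfst G e'') ∈ ({g e, g e', r} : Set (ℝ × ℝ)) := by
      rw [heq]; simp
    have hfb : f (Stmt6.bsnd G e'') ∈ ({g e, g e', r} : Set (ℝ × ℝ)) := by
      rw [heq]; simp
    have ha : f (Stmt6.bfst G e'') = r := by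
      rcases hfa with h | h | h
      · exact absurd h.symm (hnf e _)
      · exact absurd h.symm (hnf e' _)
      · exact h
    have hb : f (Stmt6.bsnd G e'') = r := by
      rcases hfb with h | h | h
      · exact absurd h.symm (hnf e _)
      · exact absurd h.symm (hnf e' _)
      · exact h
    exact Stmt6.bne G e'' (hf (ha.trans hb.symm))
  -- the bijection
  set F : V ⊕ Blocker G → ℝ × ℝ := Sum.elim f g with hF_def
  have hFmem : ∀ s, F s ∈ P := by
    rintro (v | e)
    · exact hfPmem v
    · exact hgPmem e
  have hFinj : Function.Injective F := by
    rintro (a | a) (b | b) h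
    · exact congrArg Sum.inl (hf h)
    · exact absurd h.symm (hnf b a)
    · exact absurd h (hnf a b)
    · exact congrArg Sum.inr (hginj a b h)
  have hFsurj : ∀ y : {x : ℝ × ℝ // x ∈ P}, ∃ s, F s = y.1 := by
    rintro ⟨y, hy⟩
    rw [hP_def, Finset.mem_union] at hy
    rcases hy with hy | hy
    · obtain ⟨v, -, rfl⟩ := Finset.mem_image.mp hy
      exact ⟨Sum.inl v, rfl⟩
    · obtain ⟨e, -, rfl⟩ := Finset.mem_image.mp hy
      exact ⟨Sum.inr e, rfl⟩
  have hbij : Function.Bijective (fun s => (⟨F s, hFmem s⟩ : {x : ℝ × ℝ // x ∈ P})) := by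
    constructor
    · intro a b h
      exact hFinj (congrArg Subtype.val h)
    · intro y
      obtain ⟨s, hs⟩ := hFsurj y
      exact ⟨s, Subtype.ext hs⟩
  refine ⟨P, ⟨⟨Equiv.ofBijective _ hbij, ?_⟩⟩⟩
  intro a b
  show (PVG P).Adj ⟨F a, hFmem a⟩ ⟨F b, hFmem b⟩ ↔ (Phi G).Adj a b
  have hPhi : ∀ x y : V ⊕ Blocker G, (Phi G).Adj x y ↔ x ≠ y ∧
      ((match x, y with
        | Sum.inl u, Sum.inl v => G.Adj u v
        | _, _ => True) ∨
       (match y, x with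
        | Sum.inl u, Sum.inl v => G.Adj u v
        | _, _ => True)) := by
    intro x y
    exact SimpleGraph.fromRel_adj _ x y
  show Visible P (F a) (F b) ↔ (Phi G).Adj a b
  rcases a with u | e <;> rcases b with v | e'
  · -- vertex-vertex
    rw [hPhi]
    constructor
    · intro hvis
      have huv : u ≠ v := fun h => hvis.1 (congrArg f h)
      by_cases hadj : G.Adj u v
      · exact ⟨fun h => huv (Sum.inl.inj h), Or.inl hadj⟩
      · exact absurd hvis (hVffn u v huv hadj)
    · rintro ⟨hne, h | h⟩
      · exact hVff u v h
      · exact hVff u v h.symm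
  · -- vertex-blocker
    rw [hPhi]
    constructor
    · intro _
      exact ⟨fun h => Sum.inl_ne_inr h, Or.inl trivial⟩
    · intro _
      exact hVfg u e'
  · -- blocker-vertex
    rw [hPhi]
    constructor
    · intro _
      exact ⟨fun h => Sum.inr_ne_inl h, Or.inl trivial⟩
    · intro _
      exact Stmt6.visible_symm (hVfg v e)
  · -- blocker-blocker
    rw [hPhi]
    constructor
    · intro hvis
      have : e ≠ e' := fun h => hvis.1 (congrArg g h)
      exact ⟨fun h => this (Sum.inr.inj h), Or.inl trivial⟩
    · rintro ⟨hne, -⟩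
      exact hVgg e e' (fun h => hne (congrArg Sum.inr h))
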